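/- For any n ≥ 1, X(1,2n)^{sp} = X(1,2n); that is, every V = (V_i)_{i∈ℤ/2nℤ} ∈ X(1,2n) satisfies V_i ⊆ (V_{−i})^⊥ for all i ∈ ℤ/2nℤ. -/

import Mathlib

open Matrix

/-- The Gram matrix Ω of the symplectic form: Ω_{s,t} = (−1)^{s+1} if s+t = 2n+1
(1-indexed) and 0 otherwise. -/
noncomputable def Omega (n : ℕ) : Matrix (Fin (2*n)) (Fin (2*n)) ℂ :=
  Matrix.of fun s t =>
    if ((s : ℕ) + 1) + ((t : ℕ) + 1) = 2*n + 1 then (-1 : ℂ)^((s : ℕ) + 1 + 1) else 0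

/-- The symplectic bilinear form ⟨v,w⟩ = vᵀ Ω w on ℂ^{2n}. -/
noncomputable def sform (n : ℕ) (v w : Fin (2*n) → ℂ) : ℂ :=
  v ⬝ᵥ (Omega n).mulVec w

/-- The form, as a linear map in its first argument (second argument fixed). -/
noncomputable def sformL (n : ℕ) (w : Fin (2*n) → ℂ) : (Fin (2*n) → ℂ) →ₗ[ℂ] ℂ where
  toFun v := sform n v w
  map_add' a b := by simp [sform, add_dotProduct]
  map_smul' c a := by simp [sform, smul_dotProduct]

/-- Orthogonal complement W^⊥ = {v | ⟨v,w⟩ = 0 for all w ∈ W} w.r.t. the symplectic form. -/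
noncomputable def sperp (n : ℕ) (W : Submodule ℂ (Fin (2*n) → ℂ)) :
    Submodule ℂ (Fin (2*n) → ℂ) :=
  ⨅ w ∈ W, LinearMap.ker (sformL n w)

theorem mem_sperp {n : ℕ} {W : Submodule ℂ (Fin (2*n) → ℂ)} {v : Fin (2*n) → ℂ} :
    v ∈ sperp n W ↔ ∀ w ∈ W, sform n v w = 0 := by
  simp [sperp, sformL, LinearMap.mem_ker]
  exact Iff.rfl

/-- The matrix of the shift map τ₁ : e_j ↦ e_{j+1} (1 ≤ j ≤ 2n−1), e_{2n} ↦ 0. -/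
noncomputable def tauMat (n : ℕ) : Matrix (Fin (2*n)) (Fin (2*n)) ℂ :=
  Matrix.of fun s t => if (s : ℕ) = (t : ℕ) + 1 then 1 else 0

/-- Membership in X(k,2n): a tuple of k-dimensional subspaces of ℂ^{2n} indexed by
ℤ/2nℤ with τ₁(V_i) ⊆ V_{i+1} for all i. -/
def memX (n k : ℕ) (V : ZMod (2*n) → Submodule ℂ (Fin (2*n) → ℂ)) : Prop :=
  (∀ i, Module.finrank ℂ (V i) = k) ∧
  (∀ i, Submodule.map (tauMat n).mulVecLin (V i) ≤ V (i + 1))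


/-! ### Auxiliary lemmas -/

lemma tau_apply (n : ℕ) (v : Fin (2*n) → ℂ) (s : Fin (2*n)) :
    (tauMat n).mulVecLin v s = if h : 1 ≤ (s : ℕ) then v ⟨(s:ℕ) - 1, by omega⟩ else 0 := by
  have hs := s.isLt
  simp only [mulVecLin_apply, mulVec, dotProduct, tauMat, of_apply]
  split
  · rename_i h
    rw [Finset.sum_eq_single (⟨(s:ℕ) - 1, by omega⟩ : Fin (2*n))]
    · have he : (s:ℕ) = ((⟨(s:ℕ) - 1, by omega⟩ : Fin (2*n)) : ℕ) + 1 := by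
        simp; omega
      rw [if_pos he, one_mul]
    · intro t _ ht
      have : ¬ ((s:ℕ) = (t:ℕ) + 1) := by
        intro hc; apply ht; apply Fin.ext; simp; omega
      simp [this]
    · simp
  · rename_i h
    apply Finset.sum_eq_zero
    intro t _
    have : ¬ ((s:ℕ) = (t:ℕ) + 1) := by omega
    simp [this]

lemma tau_pow_apply (n m : ℕ) (v : Fin (2*n) → ℂ) (s : Fin (2*n)) :
    ((tauMat n).mulVecLin ^ m) v s = if h : m ≤ (s : ℕ) then v ⟨(s:ℕ) - m, by omega⟩ else 0 := by
  induction m generalizing v s with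
  | zero => simp
  | succ m ih =>
    have hs := s.isLt
    rw [pow_succ, Module.End.mul_apply, ih]
    split
    · rename_i h
      rw [tau_apply]
      split
      · rename_i h2
        simp only [Fin.val_mk] at h2
        rw [dif_pos (show m + 1 ≤ (s:ℕ) by omega)]
        congr 1
      · rename_i h2
        simp only [Fin.val_mk] at h2
        rw [dif_neg (by omega)]
    · rename_i h
      rw [dif_neg (by omega)]

lemma sform_eq_sum (n : ℕ) (v w : Fin (2*n) → ℂ) :
    sform n v w = ∑ s : Fin (2*n), (-1:ℂ)^(s:ℕ) * v s * w s.rev := by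
  unfold sform Omega
  simp only [dotProduct, mulVec, of_apply]
  apply Finset.sum_congr rfl
  intro s _
  have hs := s.isLt
  rw [Finset.sum_eq_single s.rev]
  · have hrev : (s.rev : ℕ) = 2*n - 1 - (s:ℕ) := by
      simp [Fin.val_rev]; omega
    rw [if_pos (by omega)]
    ring_nf
  · intro t _ ht
    have hrev : ¬ (((s:ℕ)+1) + ((t:ℕ)+1) = 2*n+1) := by
      intro hc
      apply ht; apply Fin.ext
      simp [Fin.val_rev]; omega
    simp [hrev]
  · simp

lemma neg_one_pow_rev (n : ℕ) (s : Fin (2*n)) :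
    (-1:ℂ)^((s.rev : ℕ)) = -(-1:ℂ)^((s:ℕ)) := by
  have hs := s.isLt
  have hrev : (s.rev : ℕ) = 2*n - 1 - (s:ℕ) := by simp [Fin.val_rev]; omega
  have hpow : (-1:ℂ)^((s.rev:ℕ)) * (-1)^((s:ℕ)) = -1 := by
    rw [← pow_add]
    refine Odd.neg_one_pow ⟨n - 1, by omega⟩
  have hsq : (-1:ℂ)^((s:ℕ)) * (-1)^((s:ℕ)) = 1 := by
    rw [← pow_add]
    exact Even.neg_one_pow ⟨(s:ℕ), by ring⟩
  calc (-1:ℂ)^((s.rev:ℕ)) = (-1:ℂ)^((s.rev:ℕ)) * ((-1)^((s:ℕ)) * (-1)^((s:ℕ))) := by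
        rw [hsq, mul_one]
    _ = ((-1:ℂ)^((s.rev:ℕ)) * (-1)^((s:ℕ))) * (-1)^((s:ℕ)) := by ring
    _ = -(-1:ℂ)^((s:ℕ)) := by rw [hpow]; ring

lemma sform_self (n : ℕ) (v : Fin (2*n) → ℂ) : sform n v v = 0 := by
  rw [sform_eq_sum]
  set f : Fin (2*n) → ℂ := fun s => (-1:ℂ)^(s:ℕ) * v s * v s.rev with hf
  have h : ∑ s, f (Fin.revPerm s) = ∑ s, f s := Equiv.sum_comp _ f
  have h2 : ∑ s, f (Fin.revPerm s) = - ∑ s, f s := by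
    rw [← Finset.sum_neg_distrib]
    apply Finset.sum_congr rfl
    intro s _
    simp only [hf, Fin.revPerm_apply, Fin.rev_rev, neg_one_pow_rev]
    ring
  rw [h] at h2
  linear_combination h2 / 2

lemma tau_omega (n : ℕ) : (tauMat n)ᵀ * Omega n = - (Omega n * tauMat n) := by
  ext s t
  have hs := s.isLt
  have ht := t.isLt
  simp only [mul_apply, transpose_apply, Matrix.neg_apply, tauMat, Omega, of_apply]
  by_cases hc : (s:ℕ) + (t:ℕ) + 2 = 2*n
  · rw [Finset.sum_eq_single (⟨(s:ℕ)+1, by omega⟩ : Fin (2*n))]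
    · rw [Finset.sum_eq_single (⟨(t:ℕ)+1, by omega⟩ : Fin (2*n))]
      · simp only [Fin.val_mk]
        rw [if_pos (show (s:ℕ) + 1 + 1 + ((t:ℕ) + 1) = 2*n + 1 by omega),
          if_pos (show (s:ℕ) + 1 + ((t:ℕ) + 1 + 1) = 2*n + 1 by omega)]
        simp only [if_true]
        rw [pow_succ]
        ring
      · intro u _ hu
        have : ¬ ((u:ℕ) = (t:ℕ) + 1) := by
          intro hcc; apply hu; apply Fin.ext; simp; omega
        simp [this]
      · simp
    · intro u _ hu
      have : ¬ ((u:ℕ) = (s:ℕ) + 1) := by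
        intro hcc; apply hu; apply Fin.ext; simp; omega
      simp [this]
    · simp
  · have hL : ∀ u ∈ (Finset.univ : Finset (Fin (2*n))),
        (if (u:ℕ) = (s:ℕ) + 1 then (1:ℂ) else 0) *
          (if ((u:ℕ) + 1) + ((t:ℕ) + 1) = 2*n + 1 then (-1:ℂ)^((u:ℕ) + 1 + 1) else 0) = 0 := by
      intro u _
      by_cases h1 : (u:ℕ) = (s:ℕ) + 1
      · rw [if_neg (show ¬ (((u:ℕ) + 1) + ((t:ℕ) + 1) = 2*n + 1) by omega)]; ring
      · rw [if_neg h1]; ring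
    have hR : ∀ u ∈ (Finset.univ : Finset (Fin (2*n))),
        (if ((s:ℕ) + 1) + ((u:ℕ) + 1) = 2*n + 1 then (-1:ℂ)^((s:ℕ) + 1 + 1) else 0) *
          (if (u:ℕ) = (t:ℕ) + 1 then (1:ℂ) else 0) = 0 := by
      intro u _
      by_cases h1 : (u:ℕ) = (t:ℕ) + 1
      · rw [if_neg (show ¬ (((s:ℕ) + 1) + ((u:ℕ) + 1) = 2*n + 1) by omega)]; ring
      · rw [if_neg h1]; ring
    rw [Finset.sum_eq_zero hL, Finset.sum_eq_zero hR, neg_zero]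

lemma sform_tau_left (n : ℕ) (v w : Fin (2*n) → ℂ) :
    sform n ((tauMat n).mulVecLin v) w = - sform n v ((tauMat n).mulVecLin w) := by
  unfold sform
  simp only [mulVecLin_apply]
  have h1 : tauMat n *ᵥ v = v ᵥ* (tauMat n)ᵀ := by
    rw [← Matrix.mulVec_transpose, transpose_transpose]
  rw [h1, Matrix.dotProduct_mulVec, Matrix.vecMul_vecMul, tau_omega, Matrix.vecMul_neg,
    neg_dotProduct, Matrix.mulVec_mulVec, Matrix.dotProduct_mulVec]

lemma sform_pow_left (n m : ℕ) (v w : Fin (2*n) → ℂ) :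
    sform n (((tauMat n).mulVecLin ^ m) v) w
      = (-1:ℂ)^m * sform n v (((tauMat n).mulVecLin ^ m) w) := by
  induction m generalizing v w with
  | zero => simp
  | succ m ih =>
    have e1 : ((tauMat n).mulVecLin ^ (m+1)) v
        = ((tauMat n).mulVecLin ^ m) ((tauMat n).mulVecLin v) := by
      rw [pow_succ, Module.End.mul_apply]
    have e2 : ((tauMat n).mulVecLin ^ (m+1)) w
        = (tauMat n).mulVecLin (((tauMat n).mulVecLin ^ m) w) := by
      rw [pow_succ', Module.End.mul_apply]
    rw [e1, e2, ih, sform_tau_left, pow_succ]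
    ring

lemma sform_pow_right (n m : ℕ) (v w : Fin (2*n) → ℂ) :
    sform n v (((tauMat n).mulVecLin ^ m) w)
      = (-1:ℂ)^m * sform n (((tauMat n).mulVecLin ^ m) v) w := by
  rw [sform_pow_left]
  have hsq : (-1:ℂ)^m * (-1)^m = 1 := by
    rw [← pow_add]; exact Even.neg_one_pow ⟨m, rfl⟩
  rw [← mul_assoc, hsq, one_mul]

lemma sform_pow_right_self (n r : ℕ) (v : Fin (2*n) → ℂ) :
    sform n v (((tauMat n).mulVecLin ^ (2*r)) v) = 0 := by
  have e : ((tauMat n).mulVecLin ^ (2*r)) v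
      = ((tauMat n).mulVecLin ^ r) (((tauMat n).mulVecLin ^ r) v) := by
    rw [show 2*r = r + r from two_mul r, pow_add, Module.End.mul_apply]
  rw [e, sform_pow_right, sform_self, mul_zero]

lemma sform_pow_left_self (n r : ℕ) (w : Fin (2*n) → ℂ) :
    sform n (((tauMat n).mulVecLin ^ (2*r)) w) w = 0 := by
  have e : ((tauMat n).mulVecLin ^ (2*r)) w
      = ((tauMat n).mulVecLin ^ r) (((tauMat n).mulVecLin ^ r) w) := by
    rw [show 2*r = r + r from two_mul r, pow_add, Module.End.mul_apply]
  rw [e, sform_pow_left, sform_self, mul_zero]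

lemma vanish (n q : ℕ) (v : Fin (2*n) → ℂ) (h : ((tauMat n).mulVecLin ^ q) v = 0)
    (t : Fin (2*n)) (ht : (t:ℕ) + q < 2*n) : v t = 0 := by
  have h2 := tau_pow_apply n q v ⟨(t:ℕ) + q, by omega⟩
  rw [h] at h2
  rw [dif_pos (show q ≤ ((⟨(t:ℕ) + q, by omega⟩ : Fin (2*n)) : ℕ) by simp)] at h2
  have he : (⟨((⟨(t:ℕ) + q, by omega⟩ : Fin (2*n)) : ℕ) - q, by omega⟩ : Fin (2*n)) = t := by
    apply Fin.ext; simp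
  rw [he] at h2
  simpa using h2.symm


/-- X(1,2n)^{sp} = X(1,2n), i.e. every V ∈ X(1,2n) satisfies
V_i ⊆ (V_{−i})^⊥ for all i ∈ ℤ/2nℤ. -/
theorem statement7 (n : ℕ) (hn : 1 ≤ n)
    (V : ZMod (2*n) → Submodule ℂ (Fin (2*n) → ℂ)) (hV : memX n 1 V) :
    ∀ i, V i ≤ sperp n (V (-i)) := by
  haveI : NeZero (2*n) := ⟨by omega⟩
  haveI : Fact (1 ≤ 2*n) := ⟨by omega⟩
  -- chain lemma
  have hchain : ∀ (m : ℕ) (j : ZMod (2*n)) (x : Fin (2*n) → ℂ), x ∈ V j →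
      ((tauMat n).mulVecLin ^ m) x ∈ V (j + (m : ZMod (2*n))) := by
    intro m
    induction m with
    | zero => intro j x hx; simpa using hx
    | succ m ih =>
      intro j x hx
      have h1 := ih j x hx
      have h2 : (tauMat n).mulVecLin (((tauMat n).mulVecLin ^ m) x)
          ∈ V (j + (m : ZMod (2*n)) + 1) :=
        hV.2 (j + (m : ZMod (2*n))) (Submodule.mem_map_of_mem h1)
      have e : ((tauMat n).mulVecLin ^ (m+1)) x
          = (tauMat n).mulVecLin (((tauMat n).mulVecLin ^ m) x) := by
        rw [pow_succ', Module.End.mul_apply]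
      rw [e]
      have : j + ((m+1 : ℕ) : ZMod (2*n)) = j + (m : ZMod (2*n)) + 1 := by
        push_cast; ring
      rw [this]
      exact h2
  -- span lemma
  have hspan : ∀ (j : ZMod (2*n)) (x : Fin (2*n) → ℂ), x ∈ V j → x ≠ 0 →
      V j = Submodule.span ℂ {x} := by
    intro j x hx hx0
    refine (Submodule.eq_of_le_of_finrank_eq (Submodule.span_le.mpr (by simpa using hx)) ?_).symm
    rw [finrank_span_singleton hx0, hV.1 j]
  intro i v hv
  rw [mem_sperp]
  intro w hw
  by_cases hv0 : v = 0
  · simp [hv0, sform]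
  by_cases hw0 : w = 0
  · simp [hw0, sform]
  -- choose rp, rq
  obtain ⟨rp, rq, hrsum, hp, hq⟩ : ∃ rp rq : ℕ, rp + rq = n ∧
      (-i) + ((2*rp : ℕ) : ZMod (2*n)) = i ∧ i + ((2*rq : ℕ) : ZMod (2*n)) = -i := by
    have ha : ((i.val : ℕ) : ZMod (2*n)) = i := ZMod.natCast_rightInverse i
    have hlt : i.val < 2*n := ZMod.val_lt i
    have h2n : ((2*n : ℕ) : ZMod (2*n)) = 0 := ZMod.natCast_self _
    by_cases hcase : i.val ≤ n
    · refine ⟨i.val, n - i.val, by omega, ?_, ?_⟩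
      · push_cast [ha]; ring
      · have e : 2*(n - i.val) = 2*n - 2*i.val := by omega
        rw [e, Nat.cast_sub (by omega), h2n]
        push_cast [ha]; ring
    · refine ⟨i.val - n, 2*n - i.val, by omega, ?_, ?_⟩
      · have e : 2*(i.val - n) = 2*i.val - 2*n := by omega
        rw [e, Nat.cast_sub (by omega), h2n]
        push_cast [ha]; ring
      · have e : 2*(2*n - i.val) = 2*(2*n) - 2*i.val := by omega
        have h4 : ((2*(2*n) : ℕ) : ZMod (2*n)) = 0 := by
          push_cast [h2n]; ring
        rw [e, Nat.cast_sub (by omega), h4]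
        push_cast [ha]; ring
  have hxmem : ((tauMat n).mulVecLin ^ (2*rq)) v ∈ V (-i) := by
    have := hchain (2*rq) i v hv
    rwa [hq] at this
  by_cases hx0 : ((tauMat n).mulVecLin ^ (2*rq)) v = 0
  · have hymem : ((tauMat n).mulVecLin ^ (2*rp)) w ∈ V i := by
      have := hchain (2*rp) (-i) w hw
      rwa [hp] at this
    by_cases hy0 : ((tauMat n).mulVecLin ^ (2*rp)) w = 0
    · -- both truncated: coordinate vanishing
      rw [sform_eq_sum]
      apply Finset.sum_eq_zero
      intro s _
      have hs := s.isLt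
      by_cases hcs : (s:ℕ) + 2*rq < 2*n
      · rw [vanish n (2*rq) v hx0 s hcs]; ring
      · have hrev : (s.rev : ℕ) = 2*n - 1 - (s:ℕ) := by simp [Fin.val_rev]; omega
        rw [vanish n (2*rp) w hy0 s.rev (by omega)]; ring
    · -- v is a multiple of T^{2rp} w
      have hsp := hspan i _ hymem hy0
      rw [hsp] at hv
      obtain ⟨c, hc⟩ := Submodule.mem_span_singleton.mp hv
      rw [← hc]
      have : sform n (c • ((tauMat n).mulVecLin ^ (2*rp)) w) w
          = c * sform n (((tauMat n).mulVecLin ^ (2*rp)) w) w := by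
        simp [sform, smul_dotProduct]
      rw [this, sform_pow_left_self, mul_zero]
  · -- w is a multiple of T^{2rq} v
    have hsp := hspan (-i) _ hxmem hx0
    rw [hsp] at hw
    obtain ⟨c, hc⟩ := Submodule.mem_span_singleton.mp hw
    rw [← hc]
    have : sform n v (c • ((tauMat n).mulVecLin ^ (2*rq)) v)
        = c * sform n v (((tauMat n).mulVecLin ^ (2*rq)) v) := by
      simp [sform, Matrix.mulVec_smul, dotProduct_smul, smul_eq_mul]
    rw [this, sform_pow_right_self, mul_zero]
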